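/- In Dinitz's blocking flow algorithm on a unit-capacity network, if d_i denotes the s-t distance in the residual graph at the start of iteration i, then d_{i+1} > d_i; that is, augmenting by a blocking flow along shortest paths strictly increases the source-sink distance in the residual graph. -/

import Mathlib

open Finset

/-- `IsDipath A s t l` means the list `l` of vertices forms a directed path from
`s` to `t` along the edge relation `A`. -/
def IsDipath {X : Type*} (A : X → X → Prop) (s t : X) (l : List X) : Prop :=
  l.Chain' A ∧ l.head? = some s ∧ l.getLast? = some t

/-- Residual capacity of an integral flow `f` in a network with capacities `c`. -/
def resCap {X : Type*} (c f : X → X → ℕ) (x y : X) : ℕ := c x y - f x y + f y x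

/-- Residual adjacency. -/
def resAdj {X : Type*} (c f : X → X → ℕ) (x y : X) : Prop := 0 < resCap c f x y

/-- The set of lengths (numbers of edges) of directed `a`-`b` paths. -/
def pathLens {X : Type*} (A : X → X → Prop) (a b : X) : Set ℕ :=
  {n | ∃ l : List X, IsDipath A a b l ∧ n + 1 = l.length}

lemma dipath_singleton {X : Type*} (A : X → X → Prop) (s : X) : IsDipath A s s [s] :=
  ⟨List.isChain_singleton s, rfl, rfl⟩

lemma dipath_concat {X : Type*} {A : X → X → Prop} {s w x : X} {l : List X}
    (h : IsDipath A s w l) (hwx : A w x) : IsDipath A s x (l ++ [x]) := by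
  obtain ⟨hc, hh, hl⟩ := h
  have hne : l ≠ [] := by intro h'; subst h'; simp at hh
  refine ⟨?_, ?_, ?_⟩
  · rw [List.Chain', List.isChain_append]
    refine ⟨hc, List.isChain_singleton x, ?_⟩
    intro a ha b hb
    simp only [List.head?_cons, Option.mem_def, Option.some.injEq] at hb
    rw [hl] at ha
    simp only [Option.mem_def, Option.some.injEq] at ha
    subst ha; subst hb; exact hwx
  · rwa [List.head?_append_of_ne_nil _ hne]
  · simp

lemma infix_pair_concat {X : Type*} {u v x : X} {l : List X} (h : [u, v] <:+: l ++ [x]) :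
    [u, v] <:+: l ∨ (l.getLast? = some u ∧ v = x) := by
  obtain ⟨p, q, hpq⟩ := h
  rcases q.eq_nil_or_concat with rfl | ⟨q', y, rfl⟩
  · right
    have h1 : (p ++ [u] ++ [v] : List X) = l ++ [x] := by simpa using hpq
    have hv : v = x := by
      have := congrArg List.getLast? h1
      simpa using this
    have hl : p ++ [u] = l := by
      have := congrArg List.dropLast h1
      simpa using this
    exact ⟨by rw [← hl]; simp, hv⟩
  · left
    have h1 : ((p ++ [u, v] ++ q') ++ [y] : List X) = l ++ [x] := by
      rw [← hpq]; simp [List.concat_eq_append]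
    have hl : p ++ [u, v] ++ q' = l := (List.append_inj' h1 rfl).1
    exact ⟨p, q', hl⟩

theorem blocking_flow_increases_distance {X : Type*} [Fintype X] [DecidableEq X]
    (c : X → X → ℕ) (hc : ∀ x y, c x y ≤ 1) (s t : X) (hst : s ≠ t)
    (f : X → X → ℕ) (hf : ∀ x y, f x y ≤ c x y)
    (hfcons : ∀ v : X, v ≠ s → v ≠ t → ∑ u : X, f u v = ∑ u : X, f v u)
    (g : X → X → ℕ) (hg : ∀ x y, g x y ≤ resCap c f x y)
    (hgcons : ∀ v : X, v ≠ s → v ≠ t → ∑ u : X, g u v = ∑ u : X, g v u)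
    (hlayer : ∀ x y : X, 0 < g x y →
      sInf (pathLens (resAdj c f) s x) + 1 = sInf (pathLens (resAdj c f) s y))
    (hblocking : ∀ l : List X, IsDipath (resAdj c f) s t l →
      l.length = sInf (pathLens (resAdj c f) s t) + 1 →
      ∃ x y : X, [x, y] <:+: l ∧ g x y = resCap c f x y)
    (hreach : (pathLens (resAdj c f) s t).Nonempty) :
    ∀ l' : List X, IsDipath (resAdj (resCap c f) g) s t l' →
      sInf (pathLens (resAdj c f) s t) + 1 < l'.length := by
  set A := resAdj c f with hA
  set B := resAdj (resCap c f) g with hB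
  set δ : X → ℕ := fun x => sInf (pathLens A s x) with hδ
  -- structure of new residual edges
  have hBiff : ∀ x y : X, B x y → g x y < resCap c f x y ∨ 0 < g y x := by
    intro x y hxy
    simp only [hB, resAdj, resCap] at hxy
    simp only [resCap]
    omega
  -- reachability of a vertex with positive outgoing g-flow
  have reach_of_g : ∀ y x : X, 0 < g y x → (pathLens A s y).Nonempty := by
    intro y x hyx
    by_cases hys : y = s
    · rw [hys]
      exact ⟨0, [s], dipath_singleton A s, by simp⟩
    by_cases hyt : y = t
    · rw [hyt]; exact hreach
    have hout : 0 < ∑ u : X, g y u :=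
      lt_of_lt_of_le hyx (Finset.single_le_sum (fun u _ => Nat.zero_le _) (Finset.mem_univ x))
    have hin : 0 < ∑ u : X, g u y := by rw [hgcons y hys hyt]; exact hout
    have : ∃ u, 0 < g u y := by
      by_contra h
      push_neg at h
      simp only [Nat.le_zero] at h
      rw [Finset.sum_eq_zero (fun u _ => h u)] at hin
      exact absurd hin (lt_irrefl 0)
    obtain ⟨u, hu⟩ := this
    have hball := hlayer u y hu
    rcases Set.eq_empty_or_nonempty (pathLens A s y) with he | hne
    · rw [he] at hball; simp [Nat.sInf_empty] at hball
    · exact hne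
  -- per-edge lemma: along a new residual edge, δ increases by at most 1
  have edge_step : ∀ x y : X, B x y → (pathLens A s x).Nonempty →
      (pathLens A s y).Nonempty ∧ δ y ≤ δ x + 1 := by
    intro x y hxy hx
    rcases hBiff x y hxy with hlt | hpos
    · have hAxy : A x y := by
        simp only [hA, resAdj]
        exact lt_of_le_of_lt (Nat.zero_le _) hlt
      obtain ⟨l, hl, hlen⟩ := Nat.sInf_mem hx
      have hly : IsDipath A s y (l ++ [y]) := dipath_concat hl hAxy
      have hmem : δ x + 1 ∈ pathLens A s y := ⟨l ++ [y], hly, by simp [hδ, ← hlen]⟩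
      exact ⟨⟨_, hmem⟩, Nat.sInf_le hmem⟩
    · have hball := hlayer y x hpos
      refine ⟨reach_of_g y x hpos, ?_⟩
      simp only [hδ]
      omega
  -- strictness: an edge raising δ by exactly 1 is an unsaturated old edge
  have edge_strict : ∀ x y : X, B x y → δ y = δ x + 1 →
      A x y ∧ g x y < resCap c f x y := by
    intro x y hxy heq
    rcases hBiff x y hxy with hlt | hpos
    · refine ⟨?_, hlt⟩
      simp only [hA, resAdj]
      exact lt_of_le_of_lt (Nat.zero_le _) hlt
    · have hball := hlayer y x hpos
      simp only [hδ] at heq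
      omega
  -- main induction along the path
  have key : ∀ l : List X, ∀ x : X, IsDipath B s x l →
      (pathLens A s x).Nonempty ∧ δ x + 1 ≤ l.length ∧
      (δ x + 1 = l.length → IsDipath A s x l ∧
        ∀ u v : X, [u, v] <:+: l → g u v < resCap c f u v) := by
    intro l
    induction l using List.reverseRecOn with
    | nil => intro x hx; exact absurd hx.2.1 (by simp)
    | append_singleton l₀ z ih =>
      intro x hx
      obtain ⟨hc', hh, hl⟩ := hx
      obtain rfl : z = x := by simpa using hl
      rcases eq_or_ne l₀ [] with rfl | hne
      · -- the path is [z], so z = s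
        have hzs : z = s := by simpa using hh
        rw [hzs]
        have hmem : (0 : ℕ) ∈ pathLens A s s := ⟨[s], dipath_singleton A s, by simp⟩
        have hδs : δ s = 0 := Nat.le_zero.mp (Nat.sInf_le hmem)
        refine ⟨⟨0, hmem⟩, by simp [hδs], fun _ => ⟨by simpa using dipath_singleton A s, ?_⟩⟩
        intro u v huv
        exact absurd huv.length_le (by simp)
      · -- the path is l₀ ++ [z] with l₀ ending at some w
        obtain ⟨w, hlast₀⟩ : ∃ w, l₀.getLast? = some w :=
          ⟨l₀.getLast hne, List.getLast?_eq_some_getLast hne⟩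
        have hh₀ : l₀.head? = some s := by
          rwa [List.head?_append_of_ne_nil _ hne] at hh
        rw [List.Chain', List.isChain_append] at hc'
        obtain ⟨hc₀, -, hjoin⟩ := hc'
        have hBwx : B w z := hjoin w (by simp [hlast₀]) z (by simp)
        have hdw : IsDipath B s w l₀ := ⟨hc₀, hh₀, hlast₀⟩
        obtain ⟨hwne, hwlen, hweq⟩ := ih w hdw
        obtain ⟨hxne, hxle⟩ := edge_step w z hBwx hwne
        refine ⟨hxne, ?_, ?_⟩
        · simp only [List.length_append, List.length_singleton]
          omega
        · intro heq
          simp only [List.length_append, List.length_singleton] at heq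
          have h1 : δ w + 1 = l₀.length := by omega
          have h2 : δ z = δ w + 1 := by omega
          obtain ⟨hdp₀, hunsat₀⟩ := hweq h1
          obtain ⟨hAwx, hlt⟩ := edge_strict w z hBwx h2
          refine ⟨dipath_concat hdp₀ hAwx, ?_⟩
          intro u v huv
          rcases infix_pair_concat huv with hin | ⟨hu, rfl⟩
          · exact hunsat₀ u v hin
          · rw [hlast₀] at hu
            obtain rfl : w = u := by simpa using hu
            exact hlt
  intro l' hl'
  obtain ⟨hne, hle, heq⟩ := key l' t hl'
  rcases lt_or_eq_of_le hle with h | h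
  · exact h
  · exfalso
    obtain ⟨hdp, hunsat⟩ := heq h
    obtain ⟨x, y, hxy, hsat⟩ := hblocking l' hdp h.symm
    exact absurd hsat (Nat.ne_of_lt (hunsat x y hxy))
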